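/- Let q be an odd prime power and w ∈ F_q with η(w) = −1, where η is the quadratic character. Then the number of pairs (u₁, u₂) ∈ F_q* × F_q* such that u₁·x² + u₂·x − u₁·w = 0 has exactly two distinct solutions x ∈ F_q equals (q−1)(q − 2 + η(−1))/2. -/

import Mathlib

open Finset

/-- if η(w) = −1, the number of pairs (u₁,u₂) ∈ F_q* × F_q* such
that u₁·x² + u₂·x − u₁·w = 0 has exactly two distinct solutions equals
(q−1)(q − 2 + η(−1))/2. -/
theorem stmt11 {F : Type*} [Field F] [Fintype F] [DecidableEq F]
    (hq : Odd (Fintype.card F)) (w : F) (hw : quadraticChar F w = -1) :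
    ((Finset.univ.filter (fun u : F × F => u.1 ≠ 0 ∧ u.2 ≠ 0 ∧
        (Finset.univ.filter (fun x : F => u.1 * x ^ 2 + u.2 * x - u.1 * w = 0)).card = 2)).card : ℤ)
      = ((Fintype.card F : ℤ) - 1) * ((Fintype.card F : ℤ) - 2 + quadraticChar F (-1)) / 2 := by
  have hchar : ringChar F ≠ 2 := by
    intro h
    have := FiniteField.even_card_of_char_two h
    obtain ⟨k, hk⟩ := hq
    omega
  have h2 : (2 : F) ≠ 0 := Ring.two_ne_zero hchar
  haveI : NeZero (2 : F) := ⟨h2⟩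
  have hw0 : w ≠ 0 := fun h => by simp [h] at hw
  set χ := quadraticChar F with hχ
  set q := Fintype.card F with hqdef
  -- χ(a^2 * t) = χ t
  have hmul : ∀ a t : F, a ≠ 0 → χ (a ^ 2 * t) = χ t := by
    intro a t ha
    rw [map_mul, quadraticChar_sq_one' ha, one_mul]
  -- Step A: root count condition
  have hcond : ∀ a b : F, a ≠ 0 →
      ((univ.filter (fun x : F => a * x ^ 2 + b * x - a * w = 0)).card = 2 ↔
        χ (b ^ 2 + 4 * a ^ 2 * w) = 1) := by
    intro a b ha
    have hD : discrim a b (-(a * w)) = b ^ 2 + 4 * a ^ 2 * w := by rw [discrim]; ring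
    have hform : ∀ x : F, a * x ^ 2 + b * x - a * w = a * (x * x) + b * x + -(a * w) := by
      intro x; ring
    constructor
    · intro hcard
      have hne : (univ.filter (fun x : F => a * x ^ 2 + b * x - a * w = 0)).Nonempty := by
        rw [← card_pos, hcard]; norm_num
      obtain ⟨x, hx⟩ := hne
      rw [mem_filter] at hx
      have hx' : a * (x * x) + b * x + -(a * w) = 0 := by rw [← hform]; exact hx.2
      have hsq : discrim a b (-(a * w)) = (2 * a * x + b) ^ 2 :=
        discrim_eq_sq_of_quadratic_eq_zero hx'
      by_cases hs : 2 * a * x + b = 0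
      · -- discriminant zero: only one root
        exfalso
        have h0 : discrim a b (-(a * w)) = 0 := by rw [hsq, hs]; ring
        have : (univ.filter (fun x : F => a * x ^ 2 + b * x - a * w = 0)) = {-b / (2 * a)} := by
          ext y
          simp only [mem_filter, mem_univ, true_and, mem_singleton, hform y,
            quadratic_eq_zero_iff_of_discrim_eq_zero ha h0 y]
        rw [this] at hcard
        simp at hcard
      · rw [← hD, hsq]
        exact quadraticChar_sq_one' hs
    · intro hχ1
      have hD0 : b ^ 2 + 4 * a ^ 2 * w ≠ 0 := by
        intro h; rw [h] at hχ1; rw [hχ, quadraticChar_zero] at hχ1; norm_num at hχ1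
      have hsq : IsSquare (b ^ 2 + 4 * a ^ 2 * w) :=
        (quadraticChar_one_iff_isSquare hD0).mp hχ1
      obtain ⟨s, hs⟩ := hsq
      have hs0 : s ≠ 0 := by intro h; rw [h, mul_zero] at hs; exact hD0 hs
      have hdisc : discrim a b (-(a * w)) = s * s := by rw [hD]; exact hs
      have hset : (univ.filter (fun x : F => a * x ^ 2 + b * x - a * w = 0)) =
          {(-b + s) / (2 * a), (-b - s) / (2 * a)} := by
        ext y
        simp only [mem_filter, mem_univ, true_and, mem_insert, mem_singleton, hform y,
          quadratic_eq_zero_iff ha hdisc y]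
      rw [hset, card_insert_of_notMem, card_singleton]
      rw [mem_singleton]
      intro h
      have h2a : 2 * a ≠ 0 := mul_ne_zero h2 ha
      field_simp at h
      have h' : 2 * s = 0 := by linear_combination h
      exact hs0 ((mul_eq_zero.mp h').resolve_left h2)
  -- Step B: rewrite main filter
  have hset1 : (univ.filter (fun u : F × F => u.1 ≠ 0 ∧ u.2 ≠ 0 ∧
        (univ.filter (fun x : F => u.1 * x ^ 2 + u.2 * x - u.1 * w = 0)).card = 2)) =
      (univ.filter (fun u : F × F => u.1 ≠ 0 ∧ χ (u.2 ^ 2 + 4 * u.1 ^ 2 * w) = 1)) := by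
    apply filter_congr
    intro u _
    constructor
    · rintro ⟨h1, _, h3⟩
      exact ⟨h1, (hcond u.1 u.2 h1).mp h3⟩
    · rintro ⟨h1, h3⟩
      have hu2 : u.2 ≠ 0 := by
        intro h0
        rw [h0] at h3
        have : χ (0 ^ 2 + 4 * u.1 ^ 2 * w) = χ ((2 * u.1) ^ 2 * w) := by ring_nf
        rw [this, hmul _ _ (mul_ne_zero h2 h1), hw] at h3
        norm_num at h3
      exact ⟨h1, hu2, (hcond u.1 u.2 h1).mpr h3⟩
  -- number of square roots, as an integer
  have hsqrt : ∀ a : F, (((univ.filter (fun y : F => y ^ 2 = a)).card : ℤ)) = χ a + 1 := by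
    intro a
    have h := quadraticChar_card_sqrts hchar a
    rwa [Set.toFinset_setOf] at h
  have hq1 : 1 ≤ q := Fintype.card_pos
  have h4 : (4 : F) ≠ 0 := by
    have h := mul_ne_zero h2 h2
    rwa [show (2 : F) * 2 = 4 by norm_num] at h
  -- Step C: scale u.2 by u.1
  have hstep3 : (univ.filter (fun u : F × F => u.1 ≠ 0 ∧ χ (u.2 ^ 2 + 4 * u.1 ^ 2 * w) = 1)).card
      = (univ.filter (fun u : F × F => u.1 ≠ 0 ∧ χ (u.2 ^ 2 + 4 * w) = 1)).card := by
    apply card_nbij' (fun u => (u.1, u.2 / u.1)) (fun u => (u.1, u.1 * u.2))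
    · intro u hu
      rw [mem_coe, mem_filter] at hu ⊢
      obtain ⟨_, h1, hc⟩ := hu
      refine ⟨mem_univ _, h1, ?_⟩
      have key : u.2 ^ 2 + 4 * u.1 ^ 2 * w = u.1 ^ 2 * ((u.2 / u.1) ^ 2 + 4 * w) := by
        field_simp
      rw [← hmul u.1 _ h1, ← key]
      exact hc
    · intro u hu
      rw [mem_coe, mem_filter] at hu ⊢
      obtain ⟨_, h1, hc⟩ := hu
      refine ⟨mem_univ _, h1, ?_⟩
      have key : (u.1 * u.2) ^ 2 + 4 * u.1 ^ 2 * w = u.1 ^ 2 * (u.2 ^ 2 + 4 * w) := by ring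
      rw [key, hmul _ _ h1]
      exact hc
    · intro u hu
      obtain ⟨_, h1, _⟩ := mem_filter.mp hu
      refine Prod.ext rfl ?_
      show u.1 * (u.2 / u.1) = u.2
      field_simp
    · intro u hu
      obtain ⟨_, h1, _⟩ := mem_filter.mp hu
      refine Prod.ext rfl ?_
      show u.1 * u.2 / u.1 = u.2
      field_simp
  -- Step D: product structure
  have hprod : (univ.filter (fun u : F × F => u.1 ≠ 0 ∧ χ (u.2 ^ 2 + 4 * w) = 1)).card
      = (univ.filter (fun t : F => t ≠ 0)).card
        * (univ.filter (fun t : F => χ (t ^ 2 + 4 * w) = 1)).card := by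
    rw [← card_product, ← filter_product, univ_product_univ]
  have hcnz : (univ.filter (fun t : F => t ≠ 0)).card = q - 1 := by
    rw [filter_ne', card_erase_of_mem (mem_univ 0), card_univ]
  -- Step E: counting N
  have hd : ∀ p : F × F, p.2 ^ 2 = p.1 ^ 2 + 4 * w → p.2 - p.1 ≠ 0 := by
    intro p hp h
    have h21 : p.2 = p.1 := by linear_combination h
    rw [h21] at hp
    have h4w : 4 * w = 0 := by linear_combination -hp
    rcases mul_eq_zero.mp h4w with h' | h'
    · exact h4 h'
    · exact hw0 h'
  have hPcard : (univ.filter (fun p : F × F => p.2 ^ 2 = p.1 ^ 2 + 4 * w)).card = q - 1 := by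
    rw [← hcnz]
    apply card_nbij' (fun p => p.2 - p.1) (fun d => ((4 * w / d - d) / 2, (4 * w / d + d) / 2))
    · intro p hp
      rw [mem_coe, mem_filter] at hp ⊢
      exact ⟨mem_univ _, hd p hp.2⟩
    · intro d hdm
      rw [mem_coe, mem_filter] at hdm ⊢
      obtain ⟨_, hd0⟩ := hdm
      refine ⟨mem_univ _, ?_⟩
      show ((4 * w / d + d) / 2) ^ 2 = ((4 * w / d - d) / 2) ^ 2 + 4 * w
      field_simp
      ring
    · intro p hp
      rw [mem_coe, mem_filter] at hp
      have hd0 := hd p hp.2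
      refine Prod.ext ?_ ?_
      · show (4 * w / (p.2 - p.1) - (p.2 - p.1)) / 2 = p.1
        field_simp
        linear_combination -hp.2
      · show (4 * w / (p.2 - p.1) + (p.2 - p.1)) / 2 = p.2
        field_simp
        linear_combination -hp.2
    · intro d hdm
      show (4 * w / d + d) / 2 - (4 * w / d - d) / 2 = d
      have hd0 : d ≠ 0 := (mem_filter.mp hdm).2
      field_simp
      ring
  have hfib : (univ.filter (fun p : F × F => p.2 ^ 2 = p.1 ^ 2 + 4 * w)).card
      = ∑ t : F, (univ.filter (fun y : F => y ^ 2 = t ^ 2 + 4 * w)).card := by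
    rw [card_eq_sum_card_fiberwise (f := fun p : F × F => p.1) (t := univ)
      (fun p _ => mem_univ _)]
    apply sum_congr rfl
    intro t _
    apply card_nbij' (fun p => p.2) (fun y => (t, y))
    · intro p hp
      rw [mem_coe, mem_filter, mem_filter] at hp
      rw [mem_coe, mem_filter]
      refine ⟨mem_univ _, ?_⟩
      have h' := hp.1.2
      rw [hp.2] at h'
      exact h'
    · intro y hy
      rw [mem_coe, mem_filter] at hy
      rw [mem_coe, mem_filter, mem_filter]
      exact ⟨⟨mem_univ _, hy.2⟩, rfl⟩
    · intro p hp
      rw [mem_coe, mem_filter] at hp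
      exact Prod.ext hp.2.symm rfl
    · intro y _
      rfl
  have hsum : ∑ t : F, χ (t ^ 2 + 4 * w) = -1 := by
    have h1 : (((univ.filter (fun p : F × F => p.2 ^ 2 = p.1 ^ 2 + 4 * w)).card : ℤ))
        = ∑ t : F, (χ (t ^ 2 + 4 * w) + 1) := by
      rw [hfib]
      push_cast
      exact sum_congr rfl (fun t _ => by rw [hsqrt])
    rw [hPcard, Nat.cast_sub hq1, Nat.cast_one, sum_add_distrib, sum_const, card_univ,
      nsmul_eq_mul, mul_one] at h1
    linarith [h1]
  -- partition counts
  have e3 : (univ.filter (fun t : F => ¬χ (t ^ 2 + 4 * w) = 1)).filter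
      (fun t => χ (t ^ 2 + 4 * w) = -1) = univ.filter (fun t : F => χ (t ^ 2 + 4 * w) = -1) := by
    rw [filter_filter]
    apply filter_congr
    intro t _
    constructor
    · exact And.right
    · intro h
      exact ⟨by rw [h]; norm_num, h⟩
  have e5 : (univ.filter (fun t : F => ¬χ (t ^ 2 + 4 * w) = 1)).filter
      (fun t => ¬χ (t ^ 2 + 4 * w) = -1) = univ.filter (fun t : F => t ^ 2 + 4 * w = 0) := by
    rw [filter_filter]
    apply filter_congr
    intro t _
    constructor
    · rintro ⟨ha, hb⟩
      rcases quadraticChar_isQuadratic F (t ^ 2 + 4 * w) with h | h | h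
      · exact quadraticChar_eq_zero_iff.mp h
      · exact absurd h ha
      · exact absurd h hb
    · intro h
      constructor
      · rw [h, hχ, quadraticChar_zero]; norm_num
      · rw [h, hχ, quadraticChar_zero]; norm_num
  have hNM : ∑ t : F, χ (t ^ 2 + 4 * w)
      = ((univ.filter (fun t : F => χ (t ^ 2 + 4 * w) = 1)).card : ℤ)
        - ((univ.filter (fun t : F => χ (t ^ 2 + 4 * w) = -1)).card : ℤ) := by
    rw [← sum_filter_add_sum_filter_not univ (fun t : F => χ (t ^ 2 + 4 * w) = 1)]
    have e1 : ∑ t ∈ univ.filter (fun t : F => χ (t ^ 2 + 4 * w) = 1), χ (t ^ 2 + 4 * w)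
        = ((univ.filter (fun t : F => χ (t ^ 2 + 4 * w) = 1)).card : ℤ) := by
      rw [sum_congr rfl (fun t ht => (mem_filter.mp ht).2), sum_const, nsmul_eq_mul, mul_one]
    have e2 : ∑ t ∈ univ.filter (fun t : F => ¬χ (t ^ 2 + 4 * w) = 1), χ (t ^ 2 + 4 * w)
        = -((univ.filter (fun t : F => χ (t ^ 2 + 4 * w) = -1)).card : ℤ) := by
      rw [← sum_filter_add_sum_filter_not (univ.filter (fun t : F => ¬χ (t ^ 2 + 4 * w) = 1))
        (fun t : F => χ (t ^ 2 + 4 * w) = -1)]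
      have e4 : ∀ t ∈ (univ.filter (fun t : F => ¬χ (t ^ 2 + 4 * w) = 1)).filter
          (fun t => ¬χ (t ^ 2 + 4 * w) = -1), χ (t ^ 2 + 4 * w) = 0 := by
        intro t ht
        simp only [mem_filter] at ht
        rcases quadraticChar_isQuadratic F (t ^ 2 + 4 * w) with h | h | h
        · exact h
        · exact absurd h ht.1.2
        · exact absurd h ht.2
      rw [sum_congr rfl e4, sum_const_zero, add_zero, e3,
        sum_congr rfl (fun t ht => (mem_filter.mp ht).2), sum_const, nsmul_eq_mul]
      ring
    rw [e1, e2]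
    ring
  have hpart : (univ.filter (fun t : F => χ (t ^ 2 + 4 * w) = 1)).card
      + ((univ.filter (fun t : F => χ (t ^ 2 + 4 * w) = -1)).card
        + (univ.filter (fun t : F => t ^ 2 + 4 * w = 0)).card) = q := by
    have c1 := card_filter_add_card_filter_not (s := (univ : Finset F))
      (p := fun t : F => χ (t ^ 2 + 4 * w) = 1)
    have c2 := card_filter_add_card_filter_not
      (s := univ.filter (fun t : F => ¬χ (t ^ 2 + 4 * w) = 1))
      (p := fun t : F => χ (t ^ 2 + 4 * w) = -1)
    rw [e3, e5] at c2
    rw [c2, c1, card_univ]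
  have hZval : ((univ.filter (fun t : F => t ^ 2 + 4 * w = 0)).card : ℤ) = 1 - χ (-1) := by
    have e6 : univ.filter (fun t : F => t ^ 2 + 4 * w = 0)
        = univ.filter (fun t : F => t ^ 2 = -(4 * w)) := by
      apply filter_congr
      intro t _
      constructor <;> intro h <;> linear_combination h
    have e7 : χ (-(4 * w)) = -χ (-1) := by
      have h' : (-(4 * w)) = (-1 : F) * (2 ^ 2 * w) := by ring
      rw [h', map_mul, map_mul, hχ, quadraticChar_sq_one' h2, ← hχ, hw]
      ring
    rw [e6, hsqrt, e7]
    ring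
  have h2N : 2 * ((univ.filter (fun t : F => χ (t ^ 2 + 4 * w) = 1)).card : ℤ)
      = (q : ℤ) - 2 + χ (-1) := by
    have hB : ((univ.filter (fun t : F => χ (t ^ 2 + 4 * w) = 1)).card : ℤ)
        + (((univ.filter (fun t : F => χ (t ^ 2 + 4 * w) = -1)).card : ℤ)
          + ((univ.filter (fun t : F => t ^ 2 + 4 * w = 0)).card : ℤ)) = (q : ℤ) := by
      exact_mod_cast hpart
    rw [hNM] at hsum
    linarith [hZval, hsum, hB]
  -- assemble
  rw [hset1, hstep3, hprod, hcnz]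
  rw [← h2N, show ((q : ℤ) - 1) * (2 * ((univ.filter (fun t : F => χ (t ^ 2 + 4 * w) = 1)).card : ℤ))
    = 2 * (((q : ℤ) - 1) * ((univ.filter (fun t : F => χ (t ^ 2 + 4 * w) = 1)).card : ℤ)) from by ring,
    Int.mul_ediv_cancel_left _ (by norm_num)]
  push_cast [Nat.cast_sub hq1]
  ring
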